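/- Let δ ∈ (0,1) and ε > 0. Let μ be a probability measure on ℝ^D × {0,1} with coordinate random variables (X, Z), let h : ℝ^D → ℝ^D be a measurable guarding function, and let θ ∈ ℝ^D, φ ∈ ℝ satisfy θᵀh(x) + φ ≠ 0 for μ-almost every x. Define the downstream prediction Ŷ = τ(θᵀh(X) + φ) ∈ {0,1} ⊆ ℝ. If I_{V^δ}(h(X) → Z) < ε, then I_{V^δ}(Ŷ → Z) < ε, where I_{V^δ}(h(X) → Z) is computed with the family V^δ on ℝ^D and I_{V^δ}(Ŷ → Z) is computed with the family V^δ on ℝ. In words, if h ε-guards X against Z with respect to δ-discretized binary log-linear models, then a binary downstream hard-thresholded linear classifier trained over the guarded representations cannot leak more than ε of V^δ-information about Z. -/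

import Mathlib

open MeasureTheory
open scoped BigOperators

/-- The logistic function `σ(u) = 1/(1+exp(−u))`. -/
noncomputable def logistic (u : ℝ) : ℝ := 1 / (1 + Real.exp (-u))

/-- The hard threshold function `τ(u) = 1` if `u > 0` and `τ(u) = 0` otherwise. -/
noncomputable def hardThreshold (u : ℝ) : ℝ := if u > 0 then 1 else 0

/-- The `δ`-discretization function `ρ_δ(p) = δ` if `p ≥ 1/2` and `1 − δ` otherwise. -/
noncomputable def discretize (δ : ℝ) (p : ℝ) : ℝ := if p ≥ 1/2 then δ else 1 - δ

/-- A member of the family `V^δ` of `δ`-discretized binary log-linear models, with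
parameters `a, γ`: `q(0|x) = ρ_δ(σ(aᵀx+γ))` and `q(1|x) = 1 − q(0|x)` (labels encoded
as `Bool`). -/
noncomputable def qDisc {ι : Type*} [Fintype ι] (δ : ℝ) (a : ι → ℝ) (γ : ℝ)
    (x : ι → ℝ) (z : Bool) : ℝ :=
  if z then 1 - discretize δ (logistic ((∑ i, a i * x i) + γ))
  else discretize δ (logistic ((∑ i, a i * x i) + γ))

/-- The conditional `V^δ`-entropy `H_{V^δ}(Z|X) = −sup_{q∈V^δ} E[log q(z|x)]`. -/
noncomputable def condEntDisc {ι : Type*} [Fintype ι] (δ : ℝ)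
    (μ : Measure ((ι → ℝ) × Bool)) : ℝ :=
  - ⨆ p : (ι → ℝ) × ℝ, ∫ w, Real.log (qDisc δ p.1 p.2 w.1 w.2) ∂μ

/-- The `V^δ`-entropy `H_{V^δ}(Z) = −sup E[log q(z)]` over input-independent members
of `V^δ` (those with `a = 0`). -/
noncomputable def entDisc {ι : Type*} [Fintype ι] (δ : ℝ)
    (μ : Measure ((ι → ℝ) × Bool)) : ℝ :=
  - ⨆ γ : ℝ, ∫ w, Real.log (qDisc δ (fun _ : ι => (0:ℝ)) γ w.1 w.2) ∂μ

/-- The `V^δ`-information `I_{V^δ}(X → Z) = H_{V^δ}(Z) − H_{V^δ}(Z|X)`. -/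
noncomputable def vInfoDisc {ι : Type*} [Fintype ι] (δ : ℝ)
    (μ : Measure ((ι → ℝ) × Bool)) : ℝ :=
  entDisc δ μ - condEntDisc δ μ

-- Auxiliary lemmas
lemma logistic_half_iff (u : ℝ) : logistic u ≥ 1/2 ↔ 0 ≤ u := by
  unfold logistic
  have h1 : (0:ℝ) < 1 + Real.exp (-u) := by positivity
  rw [ge_iff_le, div_le_div_iff₀ (by norm_num) h1, one_mul, one_mul]
  constructor
  · intro hle
    have : Real.exp (-u) ≤ 1 := by linarith
    have := Real.exp_le_one_iff.mp this
    linarith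
  · intro hu
    have : Real.exp (-u) ≤ 1 := Real.exp_le_one_iff.mpr (by linarith)
    linarith

lemma discretize_logistic (δ u : ℝ) :
    discretize δ (logistic u) = if 0 ≤ u then δ else 1 - δ := by
  unfold discretize
  exact if_congr (logistic_half_iff u) rfl rfl

lemma qDisc_eq {ι : Type*} [Fintype ι] (δ : ℝ) (a : ι → ℝ) (γ : ℝ) (x : ι → ℝ) (z : Bool) :
    qDisc δ a γ x z = if (0 ≤ (∑ i, a i * x i) + γ ↔ z = true) then 1 - δ else δ := by
  unfold qDisc
  rw [discretize_logistic]
  cases z <;> by_cases hS : 0 ≤ (∑ i, a i * x i) + γ <;> simp [hS]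

lemma log_qDisc_nonpos {ι : Type*} [Fintype ι] {δ : ℝ} (hδ : δ ∈ Set.Ioo (0:ℝ) 1)
    (a : ι → ℝ) (γ : ℝ) (x : ι → ℝ) (z : Bool) :
    Real.log (qDisc δ a γ x z) ≤ 0 := by
  obtain ⟨h0, h1⟩ := hδ
  rw [qDisc_eq]
  split <;> exact Real.log_nonpos (by linarith) (by linarith)

lemma meas_logq {ι : Type*} [Fintype ι] (δ : ℝ) (a : ι → ℝ) (γ : ℝ) :
    Measurable (fun w : (ι → ℝ) × Bool => Real.log (qDisc δ a γ w.1 w.2)) := by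
  simp only [qDisc_eq, apply_ite Real.log]
  have hA : MeasurableSet {w : (ι → ℝ) × Bool | 0 ≤ (∑ i, a i * w.1 i) + γ} :=
    measurableSet_le measurable_const
      ((Finset.measurable_sum Finset.univ fun i _ =>
        (by fun_prop : Measurable fun w : (ι → ℝ) × Bool => a i * w.1 i)).add measurable_const)
  have hB : MeasurableSet {w : (ι → ℝ) × Bool | w.2 = true} := by
    have : {w : (ι → ℝ) × Bool | w.2 = true} = Prod.snd ⁻¹' {true} := by ext w; simp
    rw [this]; exact measurable_snd (measurableSet_singleton true)
  have hAB : MeasurableSet {w : (ι → ℝ) × Bool |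
      0 ≤ (∑ i, a i * w.1 i) + γ ↔ w.2 = true} := by
    have : {w : (ι → ℝ) × Bool | 0 ≤ (∑ i, a i * w.1 i) + γ ↔ w.2 = true}
        = ({w | 0 ≤ (∑ i, a i * w.1 i) + γ} ∩ {w | w.2 = true}) ∪
          ({w | 0 ≤ (∑ i, a i * w.1 i) + γ}ᶜ ∩ {w | w.2 = true}ᶜ) := by
      ext w; simp only [Set.mem_setOf_eq, Set.mem_union, Set.mem_inter_iff,
        Set.mem_compl_iff]; tauto
    rw [this]
    exact (hA.inter hB).union (hA.compl.inter hB.compl)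
  exact Measurable.ite hAB measurable_const measurable_const

lemma int_map {ι κ : Type*} [Fintype ι] [Fintype κ] (δ : ℝ)
    (μ : Measure ((κ → ℝ) × Bool)) (g : (κ → ℝ) × Bool → (ι → ℝ) × Bool)
    (hg : Measurable g) (a : ι → ℝ) (γ : ℝ) :
    ∫ w, Real.log (qDisc δ a γ w.1 w.2) ∂(μ.map g)
      = ∫ w, Real.log (qDisc δ a γ (g w).1 (g w).2) ∂μ :=
  integral_map hg.aemeasurable (meas_logq δ a γ).aestronglyMeasurable

lemma measurable_hardThreshold : Measurable hardThreshold := by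
  unfold hardThreshold
  exact Measurable.ite (measurableSet_lt measurable_const measurable_id)
    measurable_const measurable_const

/-- If the guarding function `h` `ε`-guards `X` against `Z` with respect to
`δ`-discretized binary log-linear models, i.e. `I_{V^δ}(h(X) → Z) < ε`, then the
downstream hard-thresholded linear prediction `Ŷ = τ(θᵀh(X) + φ)` (viewed as a
real-valued input) satisfies `I_{V^δ}(Ŷ → Z) < ε`. -/
theorem binary_downstream_guarded
    (D : ℕ) (δ : ℝ) (hδ : δ ∈ Set.Ioo (0:ℝ) 1) (ε : ℝ) (hε : 0 < ε)
    (μ : Measure ((Fin D → ℝ) × Bool)) [IsProbabilityMeasure μ]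
    (h : (Fin D → ℝ) → (Fin D → ℝ)) (hmeas : Measurable h)
    (θ : Fin D → ℝ) (φ : ℝ)
    (hne : ∀ᵐ w ∂μ, (∑ i, θ i * h w.1 i) + φ ≠ 0)
    (hguard : vInfoDisc δ (μ.map (fun w => (h w.1, w.2))) < ε) :
    vInfoDisc δ
        (μ.map (fun w => ((fun _ : Fin 1 => hardThreshold ((∑ i, θ i * h w.1 i) + φ)), w.2)))
      < ε := by
  obtain ⟨hδ0, hδ1⟩ := hδ
  set s : ((Fin D → ℝ) × Bool) → ℝ := fun w => (∑ i, θ i * h w.1 i) + φ with hs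
  have hsm : Measurable s := by
    apply Measurable.add _ measurable_const
    exact Finset.measurable_sum Finset.univ fun i _ =>
      ((measurable_pi_apply i).comp (hmeas.comp measurable_fst)).const_mul (θ i)
  set g₁ : ((Fin D → ℝ) × Bool) → ((Fin D → ℝ) × Bool) := fun w => (h w.1, w.2) with hg1def
  set g₂ : ((Fin D → ℝ) × Bool) → ((Fin 1 → ℝ) × Bool) :=
    fun w => ((fun _ : Fin 1 => hardThreshold (s w)), w.2) with hg2def
  have hg₁ : Measurable g₁ := (hmeas.comp measurable_fst).prodMk measurable_snd
  have hg₂ : Measurable g₂ :=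
    (measurable_pi_lambda _ fun _ => measurable_hardThreshold.comp hsm).prodMk measurable_snd
  -- entropy terms agree
  have hent : entDisc δ (μ.map g₂) = entDisc δ (μ.map g₁) := by
    unfold entDisc
    congr 1
    apply iSup_congr
    intro γ
    rw [int_map δ μ g₂ hg₂, int_map δ μ g₁ hg₁]
    apply integral_congr_ae
    filter_upwards with w
    simp [qDisc_eq, hg1def, hg2def]
  -- bddAbove for the ν₁ sup
  have hbdd : BddAbove (Set.range fun p : (Fin D → ℝ) × ℝ =>
      ∫ w, Real.log (qDisc δ p.1 p.2 w.1 w.2) ∂(μ.map g₁)) := by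
    refine ⟨0, ?_⟩
    rintro x ⟨p, rfl⟩
    exact integral_nonpos fun w => log_qDisc_nonpos ⟨hδ0, hδ1⟩ _ _ _ _
  -- key lemma: any Fin 1 model is dominated
  have key : ∀ (a : Fin 1 → ℝ) (γ : ℝ) (a' : Fin D → ℝ) (γ' : ℝ),
      (∀ᵐ w ∂μ, (0 ≤ a 0 * hardThreshold (s w) + γ ↔ 0 ≤ (∑ i, a' i * h w.1 i) + γ')) →
      (∫ w, Real.log (qDisc δ a γ (g₂ w).1 (g₂ w).2) ∂μ)
        ≤ ⨆ p : (Fin D → ℝ) × ℝ, ∫ w, Real.log (qDisc δ p.1 p.2 w.1 w.2) ∂(μ.map g₁) := by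
    intro a γ a' γ' hae
    have heq : (∫ w, Real.log (qDisc δ a γ (g₂ w).1 (g₂ w).2) ∂μ)
        = ∫ w, Real.log (qDisc δ a' γ' (g₁ w).1 (g₁ w).2) ∂μ := by
      apply integral_congr_ae
      filter_upwards [hae] with w hw
      simp only [qDisc_eq, hg1def, hg2def, Fin.sum_univ_one]
      rw [if_congr (iff_congr hw Iff.rfl) rfl rfl]
    rw [heq, ← int_map δ μ g₁ hg₁]
    exact le_ciSup hbdd (a', γ')
  have hcond : condEntDisc δ (μ.map g₁) ≤ condEntDisc δ (μ.map g₂) := by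
    unfold condEntDisc
    rw [neg_le_neg_iff]
    apply ciSup_le
    rintro ⟨a, γ⟩
    rw [int_map δ μ g₂ hg₂]
    by_cases h1 : 0 ≤ a 0 + γ <;> by_cases h2 : 0 ≤ γ
    · refine key a γ 0 1 ?_
      filter_upwards with w
      have hL : 0 ≤ a 0 * hardThreshold (s w) + γ := by
        unfold hardThreshold; split_ifs <;> simp only [mul_one, mul_zero] <;> linarith
      have hR : 0 ≤ (∑ i, (0:Fin D → ℝ) i * h w.1 i) + 1 := by simp
      exact ⟨fun _ => hR, fun _ => hL⟩
    · refine key a γ θ φ ?_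
      filter_upwards [hne] with w hw
      unfold hardThreshold
      split_ifs with h3
      · simp only [mul_one]
        exact ⟨fun _ => le_of_lt h3, fun _ => h1⟩
      · have hlt : (∑ i, θ i * h w.1 i) + φ < 0 :=
          lt_of_le_of_ne (not_lt.1 h3) hw
        simp only [mul_zero, zero_add]
        exact ⟨fun hc => absurd hc h2, fun hc => absurd hc (not_le.2 hlt)⟩
    · refine key a γ (fun i => -θ i) (-φ) ?_
      filter_upwards [hne] with w hw
      have hsum : (∑ i, (fun i => -θ i) i * h w.1 i) + (-φ) = -((∑ i, θ i * h w.1 i) + φ) := by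
        simp only [neg_mul, Finset.sum_neg_distrib]
        ring
      rw [hsum]
      unfold hardThreshold
      split_ifs with h3
      · simp only [mul_one]
        exact ⟨fun hc => absurd hc h1,
               fun hc => absurd (neg_nonneg.mp hc) (not_le.2 h3)⟩
      · have hlt : (∑ i, θ i * h w.1 i) + φ < 0 :=
          lt_of_le_of_ne (not_lt.1 h3) hw
        simp only [mul_zero, zero_add]
        exact ⟨fun _ => neg_nonneg.mpr (le_of_lt hlt), fun _ => h2⟩
    · refine key a γ 0 (-1) ?_
      filter_upwards with w
      have hL : a 0 * hardThreshold (s w) + γ < 0 := by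
        unfold hardThreshold; split_ifs <;> simp only [mul_one, mul_zero] <;> push_neg at h1 h2 <;> linarith
      have hR : (∑ i, (0:Fin D → ℝ) i * h w.1 i) + (-1) < 0 := by simp
      exact ⟨fun hc => absurd hc (not_le.2 hL), fun hc => absurd hc (not_le.2 hR)⟩
  unfold vInfoDisc at hguard ⊢
  have : (μ.map (fun w => ((fun _ : Fin 1 => hardThreshold ((∑ i, θ i * h w.1 i) + φ)), w.2)))
      = μ.map g₂ := rfl
  rw [this]
  have hg' : vInfoDisc δ (μ.map g₁) < ε := hguard
  linarith [hent, hcond, hg']
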